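/- Let G = (V, E) be a simple undirected graph and let Ĝ be the graph on vertex set V × {1,2,3,4} whose edges are: {(x,i), (y,i+1)} for every edge {x,y} ∈ E and every i ∈ {1,2,3}, together with the matching edges {(x,1), (x,4)} for every x ∈ V. Then for all x, y, z ∈ V, the three pairs {x,y}, {y,z}, {x,z} are all edges of G (i.e., (x,y,z) is a triangle in G) if and only if the four vertices (x,1), (y,2), (z,3), (x,4) form a 4-cycle in Ĝ, i.e., {(x,1),(y,2)}, {(y,2),(z,3)}, {(z,3),(x,4)}, and {(x,4),(x,1)} are all edges of Ĝ. -/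

import Mathlib

/-- The graph `Ĝ` on vertex set `V × {1,2,3,4}` (here `Fin 4 = {0,1,2,3}`):
for every edge `{x,y}` of `G` and every `i ∈ {1,2,3}` there is an edge
`{(x,i), (y,i+1)}`, and additionally there are the matching edges
`{(x,1), (x,4)}` for every `x ∈ V`. -/
def hatGraph {V : Type*} (G : SimpleGraph V) : SimpleGraph (V × Fin 4) where
  Adj u v :=
    (G.Adj u.1 v.1 ∧
      ((u.2 = 0 ∧ v.2 = 1) ∨ (u.2 = 1 ∧ v.2 = 2) ∨ (u.2 = 2 ∧ v.2 = 3) ∨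
       (v.2 = 0 ∧ u.2 = 1) ∨ (v.2 = 1 ∧ u.2 = 2) ∨ (v.2 = 2 ∧ u.2 = 3))) ∨
    (u.1 = v.1 ∧ ((u.2 = 0 ∧ v.2 = 3) ∨ (u.2 = 3 ∧ v.2 = 0)))
  symm := by
    constructor
    rintro u v (⟨hadj, h⟩ | ⟨heq, h⟩)
    · exact Or.inl ⟨hadj.symm, by tauto⟩
    · exact Or.inr ⟨heq.symm, by tauto⟩
  loopless := by
    constructor
    rintro u (⟨hadj, -⟩ | ⟨-, (⟨h0, h3⟩ | ⟨h0, h3⟩)⟩)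
    · exact G.irrefl hadj
    all_goals rw [h0] at h3; exact absurd h3 (by decide)

/-- `(x, y, z)` is a triangle in `G` iff the vertices `(x,1), (y,2), (z,3),
(x,4)` form a 4-cycle in `Ĝ`, i.e. all four consecutive pairs are edges. -/
theorem triangle_iff_fourCycle {V : Type*} (G : SimpleGraph V) (x y z : V) :
    (G.Adj x y ∧ G.Adj y z ∧ G.Adj x z) ↔
      ((hatGraph G).Adj (x, 0) (y, 1) ∧ (hatGraph G).Adj (y, 1) (z, 2) ∧
        (hatGraph G).Adj (z, 2) (x, 3) ∧ (hatGraph G).Adj (x, 3) (x, 0)) := by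
  constructor
  · rintro ⟨h1, h2, h3⟩
    refine ⟨Or.inl ⟨h1, by tauto⟩, Or.inl ⟨h2, by tauto⟩, Or.inl ⟨h3.symm, by tauto⟩,
      Or.inr ⟨rfl, by tauto⟩⟩
  · rintro ⟨(⟨h1, -⟩ | ⟨-, h⟩), (⟨h2, -⟩ | ⟨-, h⟩), (⟨h3, -⟩ | ⟨-, h⟩), -⟩
    · exact ⟨h1, h2, h3.symm⟩
    all_goals simp at h
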